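/- Let w be a random vector in ℝ^d such that E[cos(wᵀδ)] = k(δ) for every δ ∈ ℝ^d, where k : ℝ^d → ℝ, and let b be uniformly distributed on [0, 2π] and independent of w. Then for all x, y ∈ ℝ^d, E[ 2 cos(wᵀx + b) cos(wᵀy + b) ] = k(x − y). In particular, the random Fourier feature products (1/m) Σ_{i=1}^m 2 cos(w_iᵀx + b_i) cos(w_iᵀy + b_i), with (w_i, b_i) i.i.d. copies of (w, b), are unbiased estimators of the shift-invariant kernel value k(x − y). -/

import Mathlib

open MeasureTheory ProbabilityTheory
open scoped ENNReal

lemma rff_bdd_integrable {Ω : Type*} [MeasurableSpace Ω] {μ : Measure Ω}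
    [IsProbabilityMeasure μ] {f : Ω → ℝ} (hf : Measurable f) {C : ℝ}
    (hC : ∀ ω, |f ω| ≤ C) : Integrable f μ :=
  (integrable_const C).mono' hf.aestronglyMeasurable (ae_of_all _ fun ω => by
    simpa using hC ω)

lemma rff_uniform_int {Ω : Type*} [MeasurableSpace Ω] {μ : Measure Ω}
    [IsProbabilityMeasure μ] {b : Ω → ℝ} (hb : Measurable b)
    (hbunif : Measure.map b μ =
      (ENNReal.ofReal (2 * Real.pi))⁻¹ • volume.restrict (Set.Icc 0 (2 * Real.pi)))
    (g : ℝ → ℝ) (hg : Measurable g) :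
    ∫ ω, g (b ω) ∂μ = (2 * Real.pi)⁻¹ * ∫ t in Set.Icc 0 (2 * Real.pi), g t := by
  rw [← integral_map hb.aemeasurable hg.aestronglyMeasurable, hbunif,
    integral_smul_measure]
  rw [ENNReal.toReal_inv, ENNReal.toReal_ofReal Real.two_pi_pos.le, smul_eq_mul]

lemma rff_cos_two_int {Ω : Type*} [MeasurableSpace Ω] {μ : Measure Ω}
    [IsProbabilityMeasure μ] {b : Ω → ℝ} (hb : Measurable b)
    (hbunif : Measure.map b μ =
      (ENNReal.ofReal (2 * Real.pi))⁻¹ • volume.restrict (Set.Icc 0 (2 * Real.pi))) :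
    ∫ ω, Real.cos (2 * b ω) ∂μ = 0 := by
  rw [rff_uniform_int hb hbunif (fun t => Real.cos (2*t)) (by fun_prop)]
  rw [MeasureTheory.integral_Icc_eq_integral_Ioc,
    ← intervalIntegral.integral_of_le Real.two_pi_pos.le]
  rw [intervalIntegral.integral_comp_mul_left Real.cos two_ne_zero]
  simp [Real.sin_two_mul, mul_comm Real.pi 2, Real.sin_two_pi, Real.cos_two_pi]

lemma rff_sin_two_int {Ω : Type*} [MeasurableSpace Ω] {μ : Measure Ω}
    [IsProbabilityMeasure μ] {b : Ω → ℝ} (hb : Measurable b)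
    (hbunif : Measure.map b μ =
      (ENNReal.ofReal (2 * Real.pi))⁻¹ • volume.restrict (Set.Icc 0 (2 * Real.pi))) :
    ∫ ω, Real.sin (2 * b ω) ∂μ = 0 := by
  rw [rff_uniform_int hb hbunif (fun t => Real.sin (2*t)) (by fun_prop)]
  rw [MeasureTheory.integral_Icc_eq_integral_Ioc,
    ← intervalIntegral.integral_of_le Real.two_pi_pos.le]
  rw [intervalIntegral.integral_comp_mul_left Real.sin two_ne_zero]
  simp [Real.cos_two_mul, mul_comm Real.pi 2, Real.cos_two_pi]
  norm_num

lemma rff_single {Ω : Type*} [MeasurableSpace Ω] {μ : Measure Ω} [IsProbabilityMeasure μ]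
    {d : ℕ} (w : Ω → Fin d → ℝ) (b : Ω → ℝ)
    (hw : Measurable w) (hb : Measurable b)
    (hbunif : Measure.map b μ =
      (ENNReal.ofReal (2 * Real.pi))⁻¹ • volume.restrict (Set.Icc 0 (2 * Real.pi)))
    (hindep : IndepFun w b μ)
    (k : (Fin d → ℝ) → ℝ)
    (hk : ∀ δ : Fin d → ℝ, ∫ ω, Real.cos (∑ j, w ω j * δ j) ∂μ = k δ)
    (x y : Fin d → ℝ) :
    ∫ ω, 2 * Real.cos (∑ j, w ω j * x j + b ω) *
        Real.cos (∑ j, w ω j * y j + b ω) ∂μ = k (x - y) := by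
  have hwj : ∀ (c : Fin d → ℝ), Measurable (fun ω => ∑ j, w ω j * c j) := fun c =>
    Finset.measurable_sum _ fun j _ => ((measurable_pi_apply j).comp hw).mul_const _
  have hpt : ∀ ω, 2 * Real.cos (∑ j, w ω j * x j + b ω) *
      Real.cos (∑ j, w ω j * y j + b ω)
      = Real.cos (∑ j, w ω j * (x - y) j)
        + (Real.cos (∑ j, w ω j * (x j + y j)) * Real.cos (2 * b ω)
           - Real.sin (∑ j, w ω j * (x j + y j)) * Real.sin (2 * b ω)) := by
    intro ω
    have h1 : ∑ j, w ω j * (x - y) j = (∑ j, w ω j * x j) - (∑ j, w ω j * y j) := by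
      simp [mul_sub, Finset.sum_sub_distrib]
    have h2 : ∑ j, w ω j * (x j + y j) = (∑ j, w ω j * x j) + (∑ j, w ω j * y j) := by
      simp [mul_add, Finset.sum_add_distrib]
    rw [h1, h2]
    set a := ∑ j, w ω j * x j
    set c := ∑ j, w ω j * y j
    set t := b ω
    rw [two_mul t, Real.cos_add a t, Real.cos_add c t, Real.cos_sub, Real.cos_add t t,
      Real.sin_add t t, Real.cos_add a c, Real.sin_add a c]
    linear_combination (Real.cos a * Real.cos c + Real.sin a * Real.sin c) *
      Real.sin_sq_add_cos_sq t
  simp_rw [hpt]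
  have hcos1 : Integrable (fun ω => Real.cos (∑ j, w ω j * (x - y) j)) μ :=
    rff_bdd_integrable ((hwj _).cos) (fun ω => Real.abs_cos_le_one _)
  have hS := hwj (fun j => x j + y j)
  have hb2c : Measurable (fun ω => Real.cos (2 * b ω)) := by fun_prop
  have hb2s : Measurable (fun ω => Real.sin (2 * b ω)) := by fun_prop
  have hprod1 : Integrable (fun ω => Real.cos (∑ j, w ω j * (x j + y j)) *
      Real.cos (2 * b ω)) μ :=
    rff_bdd_integrable (hS.cos.mul hb2c) (fun ω => by
      rw [abs_mul]
      exact mul_le_one₀ (Real.abs_cos_le_one _) (abs_nonneg _) (Real.abs_cos_le_one _))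
  have hprod2 : Integrable (fun ω => Real.sin (∑ j, w ω j * (x j + y j)) *
      Real.sin (2 * b ω)) μ :=
    rff_bdd_integrable (hS.sin.mul hb2s) (fun ω => by
      rw [abs_mul]
      exact mul_le_one₀ (Real.abs_sin_le_one _) (abs_nonneg _) (Real.abs_sin_le_one _))
  have hsub : Integrable (fun ω => Real.cos (∑ j, w ω j * (x j + y j)) * Real.cos (2 * b ω)
      - Real.sin (∑ j, w ω j * (x j + y j)) * Real.sin (2 * b ω)) μ := hprod1.sub hprod2
  rw [integral_add hcos1 hsub, integral_sub hprod1 hprod2, hk]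
  have hφc : Measurable (fun v : Fin d → ℝ => Real.cos (∑ j, v j * (x j + y j))) :=
    (Finset.measurable_sum _ fun j _ => (measurable_pi_apply j).mul_const _).cos
  have hφs : Measurable (fun v : Fin d → ℝ => Real.sin (∑ j, v j * (x j + y j))) :=
    (Finset.measurable_sum _ fun j _ => (measurable_pi_apply j).mul_const _).sin
  have e1 : ∫ ω, Real.cos (∑ j, w ω j * (x j + y j)) * Real.cos (2 * b ω) ∂μ
      = (∫ ω, Real.cos (∑ j, w ω j * (x j + y j)) ∂μ) * ∫ ω, Real.cos (2 * b ω) ∂μ :=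
    IndepFun.integral_fun_mul_eq_mul_integral (hindep.comp hφc (by fun_prop : Measurable fun t : ℝ => Real.cos (2 * t)))
      hS.cos.aestronglyMeasurable hb2c.aestronglyMeasurable
  have e2 : ∫ ω, Real.sin (∑ j, w ω j * (x j + y j)) * Real.sin (2 * b ω) ∂μ
      = (∫ ω, Real.sin (∑ j, w ω j * (x j + y j)) ∂μ) * ∫ ω, Real.sin (2 * b ω) ∂μ :=
    IndepFun.integral_fun_mul_eq_mul_integral (hindep.comp hφs (by fun_prop : Measurable fun t : ℝ => Real.sin (2 * t)))
      hS.sin.aestronglyMeasurable hb2s.aestronglyMeasurable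
  rw [e1, e2, rff_cos_two_int hb hbunif, rff_sin_two_int hb hbunif]
  ring

/-- **Random Fourier features are unbiased (Section 2.1 of the paper).**
Let `w` be a random vector in `ℝ^d` with `E[cos (wᵀ δ)] = k δ` for all `δ`, and let `b`
be uniform on `[0, 2π]` and independent of `w`.  Then for all `x, y`,
`E[2 cos (wᵀ x + b) cos (wᵀ y + b)] = k (x − y)`; in particular, averages
`(1/m) ∑ i, 2 cos (wᵢᵀ x + bᵢ) cos (wᵢᵀ y + bᵢ)` over i.i.d. copies `(wᵢ, bᵢ)` of
`(w, b)` are unbiased estimators of the shift-invariant kernel value `k (x − y)`. -/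
theorem random_fourier_features_unbiased
    {Ω : Type*} [MeasurableSpace Ω] {μ : Measure Ω} [IsProbabilityMeasure μ]
    {d : ℕ} (w : Ω → Fin d → ℝ) (b : Ω → ℝ)
    (hw : Measurable w) (hb : Measurable b)
    (hbunif : Measure.map b μ =
      (ENNReal.ofReal (2 * Real.pi))⁻¹ • volume.restrict (Set.Icc 0 (2 * Real.pi)))
    (hindep : IndepFun w b μ)
    (k : (Fin d → ℝ) → ℝ)
    (hk : ∀ δ : Fin d → ℝ, ∫ ω, Real.cos (∑ j, w ω j * δ j) ∂μ = k δ)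
    {m : ℕ} (hm : 0 < m) (W : Fin m → Ω → Fin d → ℝ) (B : Fin m → Ω → ℝ)
    (hWmeas : ∀ i, Measurable (W i)) (hBmeas : ∀ i, Measurable (B i))
    (hiid : ∀ i, IdentDistrib (fun ω => (W i ω, B i ω)) (fun ω => (w ω, b ω)) μ μ)
    (hWBindep : iIndepFun (fun i ω => (W i ω, B i ω)) μ) :
    ∀ x y : Fin d → ℝ,
      (∫ ω, 2 * Real.cos (∑ j, w ω j * x j + b ω) *
          Real.cos (∑ j, w ω j * y j + b ω) ∂μ = k (x - y)) ∧
      ∫ ω, (m : ℝ)⁻¹ * ∑ i, 2 * Real.cos (∑ j, W i ω j * x j + B i ω) *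
          Real.cos (∑ j, W i ω j * y j + B i ω) ∂μ = k (x - y) := by
  intro x y
  have h1 := rff_single w b hw hb hbunif hindep k hk x y
  refine ⟨h1, ?_⟩
  have hF : Measurable (fun p : (Fin d → ℝ) × ℝ =>
      2 * Real.cos (∑ j, p.1 j * x j + p.2) * Real.cos (∑ j, p.1 j * y j + p.2)) := by
    have hs : ∀ c : Fin d → ℝ, Measurable (fun p : (Fin d → ℝ) × ℝ => ∑ j, p.1 j * c j + p.2) :=
      fun c => (Finset.measurable_sum _ fun j _ =>
        ((measurable_pi_apply j).comp measurable_fst).mul_const _).add measurable_snd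
    exact (measurable_const.mul (hs x).cos).mul (hs y).cos
  have hterm : ∀ i : Fin m, ∫ ω, 2 * Real.cos (∑ j, W i ω j * x j + B i ω) *
      Real.cos (∑ j, W i ω j * y j + B i ω) ∂μ = k (x - y) := fun i =>
    (((hiid i).comp hF).integral_eq).trans h1
  have hmeasi : ∀ i : Fin m, Measurable (fun ω => 2 * Real.cos (∑ j, W i ω j * x j + B i ω) *
      Real.cos (∑ j, W i ω j * y j + B i ω)) := by
    intro i
    have hs : ∀ c : Fin d → ℝ, Measurable (fun ω => ∑ j, W i ω j * c j + B i ω) := fun c =>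
      (Finset.measurable_sum _ fun j _ =>
        ((measurable_pi_apply j).comp (hWmeas i)).mul_const _).add (hBmeas i)
    exact (measurable_const.mul (hs x).cos).mul (hs y).cos
  have hinti : ∀ i : Fin m, Integrable (fun ω => 2 * Real.cos (∑ j, W i ω j * x j + B i ω) *
      Real.cos (∑ j, W i ω j * y j + B i ω)) μ := fun i =>
    rff_bdd_integrable (hmeasi i) (C := 2) (fun ω => by
      rw [abs_mul, abs_mul, abs_two]
      nlinarith [Real.abs_cos_le_one (∑ j, W i ω j * x j + B i ω),
        Real.abs_cos_le_one (∑ j, W i ω j * y j + B i ω),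
        abs_nonneg (Real.cos (∑ j, W i ω j * x j + B i ω)),
        abs_nonneg (Real.cos (∑ j, W i ω j * y j + B i ω))])
  rw [integral_const_mul, integral_finset_sum _ fun i _ => hinti i]
  rw [Finset.sum_congr rfl fun i _ => hterm i, Finset.sum_const, Finset.card_univ,
    Fintype.card_fin, nsmul_eq_mul]
  field_simp
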